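/- Let E be a nontrivial finite-dimensional real inner product space and A : E → E a self-adjoint linear operator satisfying μ·‖v‖² ≤ ⟪Av,v⟫ ≤ L·‖v‖² for all v ∈ E, with constants 0 < μ ≤ L, and set κ := L/μ. Then A is bijective, and for every b ∈ E, every initial guess x₀ ∈ E, and every ℓ ∈ ℕ, writing x* := A⁻¹b and r₀ := b − A x₀, there exists y in the affine Krylov space x₀ + span{A^j r₀ : 0 ≤ j < ℓ} such that ⟪A(x* − y), x* − y⟫ ≤ 4·((√κ − 1)/(√κ + 1))^{2ℓ} · ⟪A(x* − x₀), x* − x₀⟫. In particular, the ℓ-th conjugate gradient iterate, being the minimizer of the A-norm error over this affine Krylov space, satisfies the error bound ‖x* − x^{(ℓ)}‖_A ≤ 2·((√κ − 1)/(√κ + 1))^ℓ·‖x* − x₀‖_A. -/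

import Mathlib

open Polynomial Real RealInnerProductSpace

lemma cheb_deg : ∀ n : ℕ, (Polynomial.Chebyshev.T ℝ (n : ℤ)).natDegree ≤ n := by
  intro n
  induction n using Nat.strong_induction_on with
  | _ n ih =>
    match n with
    | 0 => simp [Polynomial.Chebyshev.T_zero]
    | 1 => simp [Polynomial.Chebyshev.T_one]
    | (n+2) =>
      have h1 := ih (n+1) (by omega)
      have h0 := ih n (by omega)
      have hc1 : ((n+1 : ℕ) : ℤ) = (n:ℤ) + 1 := by push_cast; ring
      rw [hc1] at h1
      have hc : (((n:ℕ)+2 : ℕ) : ℤ) = (n:ℤ) + 2 := by push_cast; ring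
      rw [hc, Polynomial.Chebyshev.T_add_two]
      refine le_trans (natDegree_sub_le _ _) (max_le ?_ (by omega))
      refine le_trans natDegree_mul_le ?_
      have : (2 * X : ℝ[X]).natDegree ≤ 1 := le_trans natDegree_mul_le (by simp)
      omega

lemma cheb_cosh (t : ℝ) : ∀ n : ℕ, (Polynomial.Chebyshev.T ℝ (n : ℤ)).eval (Real.cosh t) = Real.cosh (n * t) := by
  intro n
  induction n using Nat.strong_induction_on with
  | _ n ih =>
    match n with
    | 0 => simp [Polynomial.Chebyshev.T_zero]
    | 1 => simp [Polynomial.Chebyshev.T_one]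
    | (n+2) =>
      have h1 := ih (n+1) (by omega)
      have h0 := ih n (by omega)
      have hc1 : ((n+1 : ℕ) : ℤ) = (n:ℤ) + 1 := by push_cast; ring
      rw [hc1] at h1
      have hc : (((n:ℕ)+2 : ℕ) : ℤ) = (n:ℤ) + 2 := by push_cast; ring
      rw [hc, Polynomial.Chebyshev.T_add_two]
      have ha := Real.cosh_add ((n+1)*t) t
      have hb := Real.cosh_sub ((n+1)*t) t
      simp only [eval_sub, eval_mul, eval_ofNat, eval_X]
      rw [h1, h0]
      have e1 : ((n:ℝ)+1)*t + t = ((n:ℝ)+2)*t := by ring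
      have e2 : ((n:ℝ)+1)*t - t = (n:ℝ)*t := by ring
      rw [e1] at ha; rw [e2] at hb
      push_cast
      nlinarith [ha, hb]

lemma cheb_bound (n : ℕ) {x : ℝ} (hx : |x| ≤ 1) :
    |(Polynomial.Chebyshev.T ℝ (n : ℤ)).eval x| ≤ 1 := by
  rw [abs_le] at hx
  have := Real.cos_arccos hx.1 hx.2
  rw [← this, Polynomial.Chebyshev.T_real_cos]
  exact Real.abs_cos_le_one _

lemma quad_eq_smul {E : Type*} [NormedAddCommGroup E] [InnerProductSpace ℝ E]
    (A : E →ₗ[ℝ] E) (hA : ∀ x y : E, ⟪A x, y⟫ = ⟪x, A y⟫) (μ : ℝ)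
    (hq : ∀ v : E, ⟪A v, v⟫ = μ * ‖v‖ ^ 2) : ∀ v, A v = μ • v := by
  have hz : ∀ v : E, ⟪A v - μ • v, v⟫ = 0 := by
    intro v
    rw [inner_sub_left, real_inner_smul_left, hq, real_inner_self_eq_norm_sq]
    ring
  have hxy : ∀ x y : E, ⟪A x - μ • x, y⟫ = 0 := by
    intro x y
    have h := hz (x + y)
    have hsymm : ⟪A y - μ • y, x⟫ = ⟪A x - μ • x, y⟫ := by
      rw [inner_sub_left, inner_sub_left, real_inner_smul_left, real_inner_smul_left,
        hA y x, real_inner_comm y (A x), real_inner_comm y x]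
    have hexp : ⟪A (x + y) - μ • (x + y), x + y⟫ =
        ⟪A x - μ • x, x⟫ + ⟪A x - μ • x, y⟫ + (⟪A y - μ • y, x⟫ + ⟪A y - μ • y, y⟫) := by
      rw [map_add, smul_add,
        show A x + A y - (μ • x + μ • y) = (A x - μ • x) + (A y - μ • y) from by abel,
        inner_add_left, inner_add_right, inner_add_right]
    rw [hexp, hz x, hz y, hsymm] at h
    linarith
  intro v
  have h := hxy v (A v - μ • v)
  rw [← sub_eq_zero]
  exact inner_self_eq_zero.mp h

lemma spectral_poly_bound {E : Type*} [NormedAddCommGroup E] [InnerProductSpace ℝ E]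
    [FiniteDimensional ℝ E]
    (A : E →ₗ[ℝ] E) (hsym : A.IsSymmetric) (μ L : ℝ) (hμ : 0 < μ)
    (hlow : ∀ v : E, μ * ‖v‖ ^ 2 ≤ ⟪A v, v⟫)
    (hup : ∀ v : E, ⟪A v, v⟫ ≤ L * ‖v‖ ^ 2)
    (p : ℝ[X]) (M : ℝ) (hM : ∀ t : ℝ, μ ≤ t → t ≤ L → (p.eval t) ^ 2 ≤ M)
    (e : E) :
    ⟪A ((Polynomial.aeval A p) e), (Polynomial.aeval A p) e⟫ ≤ M * ⟪A e, e⟫ := by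
  set n := Module.finrank ℝ E with hn'
  have hn : Module.finrank ℝ E = n := rfl
  set b := hsym.eigenvectorBasis hn with hb
  set lam := hsym.eigenvalues hn with hlam
  have hev : ∀ i, Module.End.HasEigenvector A (lam i) (b i) :=
    fun i => hsym.hasEigenvector_eigenvectorBasis hn i
  have hnorm : ∀ i, ‖b i‖ = 1 := fun i => b.orthonormal.1 i
  have hlamb : ∀ i, μ ≤ lam i ∧ lam i ≤ L := by
    intro i
    have h1 := hlow (b i)
    have h2 := hup (b i)
    have h3 : ⟪A (b i), b i⟫ = lam i := by
      rw [(hev i).apply_eq_smul, real_inner_smul_left, real_inner_self_eq_norm_sq, hnorm i]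
      ring
    rw [h3, hnorm i] at h1 h2
    constructor <;> linarith
  set c : Fin n → ℝ := fun i => ⟪b i, e⟫ with hc
  -- expansions
  have he : e = ∑ i, c i • b i := (b.sum_repr' e).symm
  set u := (Polynomial.aeval A p) e with hu'
  have hu : u = ∑ i, (c i * p.eval (lam i)) • b i := by
    rw [hu']
    conv_lhs => rw [he]
    rw [map_sum]
    refine Finset.sum_congr rfl fun i _ => ?_
    rw [map_smul, Module.End.aeval_apply_of_hasEigenvector (hev i), smul_smul]
  have hAu : A u = ∑ i, (c i * p.eval (lam i) * lam i) • b i := by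
    rw [hu, map_sum]
    refine Finset.sum_congr rfl fun i _ => ?_
    rw [map_smul, (hev i).apply_eq_smul, smul_smul]
  have hAe : A e = ∑ i, (c i * lam i) • b i := by
    conv_lhs => rw [he]
    rw [map_sum]
    refine Finset.sum_congr rfl fun i _ => ?_
    rw [map_smul, (hev i).apply_eq_smul, smul_smul]
  have key : ∀ (x y : Fin n → ℝ),
      ⟪∑ i, x i • b i, ∑ i, y i • b i⟫ = ∑ i, x i * y i := by
    intro x y
    rw [inner_sum]
    refine Finset.sum_congr rfl fun i _ => ?_
    rw [real_inner_smul_right, b.orthonormal.inner_left_fintype]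
    simp [mul_comm]
  have h1 : ⟪A u, u⟫ = ∑ i, (c i * p.eval (lam i) * lam i) * (c i * p.eval (lam i)) := by
    rw [hAu]; conv_lhs => rw [hu]
    exact key _ _
  have h2 : ⟪A e, e⟫ = ∑ i, (c i * lam i) * (c i) := by
    rw [hAe]; conv_lhs => rw [he]
    exact key _ _
  rw [h1, h2, Finset.mul_sum]
  refine Finset.sum_le_sum fun i _ => ?_
  have hμi := (hlamb i).1
  have hLi := (hlamb i).2
  have hMi := hM (lam i) hμi hLi
  have hM0 : 0 ≤ M := le_trans (sq_nonneg _) hMi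
  nlinarith [sq_nonneg (c i), sq_nonneg (c i * p.eval (lam i)), mul_nonneg (sq_nonneg (c i)) (le_trans hμ.le hμi)]
lemma krylov_cheb {E : Type*} [NormedAddCommGroup E] [InnerProductSpace ℝ E]
    [FiniteDimensional ℝ E]
    (A : E →ₗ[ℝ] E) (hA : ∀ x y : E, ⟪A x, y⟫ = ⟪x, A y⟫)
    (μ L : ℝ) (hμ : 0 < μ) (hμL : μ ≤ L)
    (hlow : ∀ v : E, μ * ‖v‖ ^ 2 ≤ ⟪A v, v⟫)
    (hup : ∀ v : E, ⟪A v, v⟫ ≤ L * ‖v‖ ^ 2)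
    (κ : ℝ) (hκ : κ = L / μ)
    (b x₀ : E) (ℓ : ℕ) (xstar : E) (hx : A xstar = b) :
    ∃ y : E,
      (∃ z ∈ Submodule.span ℝ {w : E | ∃ j < ℓ, w = (A ^ j) (b - A x₀)}, y = x₀ + z) ∧
      ⟪A (xstar - y), xstar - y⟫ ≤
        4 * ((Real.sqrt κ - 1) / (Real.sqrt κ + 1)) ^ (2 * ℓ) *
          ⟪A (xstar - x₀), xstar - x₀⟫ := by
  have hinn0 : (0:ℝ) ≤ ⟪A (xstar - x₀), xstar - x₀⟫ :=
    le_trans (by positivity) (hlow _)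
  have hr : b - A x₀ = A (xstar - x₀) := by rw [← hx, ← map_sub]
  -- case ℓ = 0
  rcases Nat.eq_zero_or_pos ℓ with hℓ | hℓ
  · subst hℓ
    refine ⟨x₀, ⟨0, Submodule.zero_mem _, by simp⟩, ?_⟩
    simp only [Nat.mul_zero, pow_zero, mul_one]
    linarith
  -- case μ = L
  by_cases hML : L = μ
  · have hquad : ∀ v : E, ⟪A v, v⟫ = μ * ‖v‖ ^ 2 := by
      intro v
      have := hup v
      rw [hML] at this
      exact le_antisymm this (hlow v)
    have hAid := quad_eq_smul A hA μ hquad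
    refine ⟨xstar, ⟨μ⁻¹ • (b - A x₀), ?_, ?_⟩, ?_⟩
    · exact Submodule.smul_mem _ _ (Submodule.subset_span ⟨0, hℓ, by simp⟩)
    · rw [hr, hAid, smul_smul, inv_mul_cancel₀ hμ.ne', one_smul]
      abel
    · have hκ1 : κ = 1 := by rw [hκ, hML, div_self hμ.ne']
      rw [hκ1, Real.sqrt_one]
      simp only [sub_self, inner_zero_right, map_zero, zero_div, inner_zero_left]
      rw [zero_pow (by omega : 2 * ℓ ≠ 0)]
      simp
  -- main case: μ < L, ℓ ≥ 1
  have hlt : μ < L := lt_of_le_of_ne hμL (Ne.symm hML)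
  have hL : 0 < L := lt_trans hμ hlt
  have hd : 0 < L - μ := sub_pos.2 hlt
  have hκ1 : 1 < κ := by rw [hκ, lt_div_iff₀ hμ]; linarith
  have hκ0 : (0:ℝ) ≤ κ := by linarith
  set s1 := Real.sqrt κ with hs1def
  have hsq : s1 ^ 2 = κ := Real.sq_sqrt hκ0
  have hs1 : 1 < s1 := by nlinarith [Real.sqrt_nonneg κ]
  set σ := (s1 - 1) / (s1 + 1) with hσdef
  have hσpos : 0 < σ := div_pos (by linarith) (by linarith)
  set a := (s1 + 1) / (s1 - 1) with hadef
  have hapos : 0 < a := div_pos (by linarith) (by linarith)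
  have hainv : a⁻¹ = σ := by
    rw [hadef, hσdef, inv_div]
  set s := Real.log a with hsdef
  have hexp : Real.exp s = a := Real.exp_log hapos
  have hexpneg : Real.exp (-s) = σ := by rw [Real.exp_neg, hexp, hainv]
  have hL' : L = s1 ^ 2 * μ := by rw [hsq, hκ]; field_simp
  have hcosh : Real.cosh s = (L + μ) / (L - μ) := by
    rw [Real.cosh_eq, hexp, hexpneg, hσdef, hadef, hL']
    have h1 : s1 - 1 ≠ 0 := by linarith
    have h2 : s1 + 1 ≠ 0 := by linarith
    have h3 : s1 ^ 2 * μ - μ ≠ 0 := by nlinarith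
    have h4 : s1 ^ 2 - 1 ≠ 0 := by nlinarith
    field_simp
    ring
  set Tn := Polynomial.Chebyshev.T ℝ (ℓ : ℤ) with hTn
  set xbar := (L + μ) / (L - μ) with hxbar
  have hTval : Tn.eval xbar = Real.cosh (ℓ * s) := by
    rw [← hcosh, hTn, cheb_cosh]
  have hTpos : 0 < Tn.eval xbar := by rw [hTval]; exact Real.cosh_pos _
  have hTge : 1 / 2 * a ^ ℓ ≤ Tn.eval xbar := by
    rw [hTval, Real.cosh_eq, Real.exp_nat_mul, hexp]
    have := Real.exp_pos (-(ℓ * s))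
    linarith
  have hTinv : (Tn.eval xbar)⁻¹ ≤ 2 * σ ^ ℓ := by
    have ha2 : 0 < (1/2 : ℝ) * a ^ ℓ := by positivity
    have h := inv_anti₀ ha2 hTge
    have h2 : ((1/2 : ℝ) * a ^ ℓ)⁻¹ = 2 * σ ^ ℓ := by
      rw [mul_inv, ← inv_pow, hainv]
      norm_num
    linarith [h2 ▸ h]
  set m : ℝ[X] := Polynomial.C xbar - Polynomial.C (2/(L-μ)) * Polynomial.X with hm
  have hmeval : ∀ t : ℝ, m.eval t = xbar - 2/(L-μ) * t := by
    intro t; simp [hm]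
  have hmabs : ∀ t : ℝ, μ ≤ t → t ≤ L → |m.eval t| ≤ 1 := by
    intro t h1 h2
    rw [hmeval, hxbar, show (L+μ)/(L-μ) - 2/(L-μ)*t = (L+μ-2*t)/(L-μ) from by ring,
      abs_div, abs_of_pos hd, div_le_one hd, abs_le]
    constructor <;> linarith
  set p : ℝ[X] := Polynomial.C (Tn.eval xbar)⁻¹ * (Tn.comp m) with hp
  have hpeval : ∀ t : ℝ, p.eval t = (Tn.eval xbar)⁻¹ * Tn.eval (m.eval t) := by
    intro t; simp [hp, eval_comp]
  have hp0 : p.eval 0 = 1 := by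
    have hm0 : m.eval 0 = xbar := by simp [hm]
    rw [hpeval, hm0]
    exact inv_mul_cancel₀ hTpos.ne'
  have hmdeg : m.natDegree ≤ 1 := by
    refine le_trans (natDegree_sub_le _ _) (max_le (by simp) ?_)
    refine le_trans (natDegree_C_mul_le _ _) (by simp)
  have hpdeg : p.natDegree ≤ ℓ := by
    refine le_trans (natDegree_C_mul_le _ _) (le_trans (natDegree_comp_le) ?_)
    calc Tn.natDegree * m.natDegree ≤ ℓ * 1 := Nat.mul_le_mul (cheb_deg ℓ) hmdeg
      _ = ℓ := by omega
  have hpbound : ∀ t : ℝ, μ ≤ t → t ≤ L → (p.eval t) ^ 2 ≤ 4 * σ ^ (2*ℓ) := by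
    intro t h1 h2
    have h3 : |p.eval t| ≤ 2 * σ ^ ℓ := by
      rw [hpeval, abs_mul, abs_inv, abs_of_pos hTpos]
      calc (Tn.eval xbar)⁻¹ * |Tn.eval (m.eval t)| ≤ (Tn.eval xbar)⁻¹ * 1 :=
            mul_le_mul_of_nonneg_left (cheb_bound ℓ (hmabs t h1 h2)) (by positivity)
        _ = (Tn.eval xbar)⁻¹ := mul_one _
        _ ≤ 2 * σ ^ ℓ := hTinv
    calc (p.eval t) ^ 2 = |p.eval t| ^ 2 := (sq_abs _).symm
      _ ≤ (2 * σ ^ ℓ) ^ 2 := pow_le_pow_left₀ (abs_nonneg _) h3 2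
      _ = 4 * σ ^ (2*ℓ) := by rw [mul_pow, ← pow_mul, Nat.mul_comm]; norm_num
  set q : ℝ[X] := (1 - p).divX with hq
  have hqX : q * X = 1 - p := by
    have h0 : (1 - p).coeff 0 = 0 := by
      rw [coeff_sub, coeff_zero_eq_eval_zero, coeff_zero_eq_eval_zero, hp0]
      simp
    have h := Polynomial.divX_mul_X_add (1 - p)
    rw [h0] at h
    simpa using h
  have hqdeg : q.natDegree ≤ ℓ - 1 := by
    rw [hq, natDegree_divX_eq_natDegree_tsub_one]
    have : (1 - p).natDegree ≤ ℓ :=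
      le_trans (natDegree_sub_le _ _) (max_le (by simp) hpdeg)
    omega
  -- define y
  set z := (Polynomial.aeval A q) (b - A x₀) with hz
  refine ⟨x₀ + z, ⟨z, ?_, rfl⟩, ?_⟩
  · -- membership
    rw [hz, Polynomial.aeval_eq_sum_range, LinearMap.coe_sum, Finset.sum_apply]
    refine Submodule.sum_mem _ fun i hi => ?_
    rw [Finset.mem_range] at hi
    rw [LinearMap.smul_apply]
    refine Submodule.smul_mem _ _ (Submodule.subset_span ⟨i, by omega, rfl⟩)
  · -- the bound
    have herr : xstar - (x₀ + z) = (Polynomial.aeval A p) (xstar - x₀) := by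
      have hpq : p = 1 - q * X := by rw [hqX]; ring
      rw [hpq, hz, hr]
      simp only [map_sub, map_one, map_mul, aeval_X, LinearMap.sub_apply,
        Module.End.one_apply, Module.End.mul_apply]
      abel
    rw [herr]
    have hsymA : A.IsSymmetric := fun x y => hA x y
    have := spectral_poly_bound A hsymA μ L hμ hlow hup p (4 * σ ^ (2*ℓ)) hpbound (xstar - x₀)
    linarith

theorem conjugate_gradient_convergence
    {E : Type*} [NormedAddCommGroup E] [InnerProductSpace ℝ E]
    [FiniteDimensional ℝ E] [Nontrivial E]
    (A : E →ₗ[ℝ] E) (hA : ∀ x y : E, ⟪A x, y⟫ = ⟪x, A y⟫)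
    (μ L : ℝ) (hμ : 0 < μ) (hμL : μ ≤ L)
    (hlow : ∀ v : E, μ * ‖v‖ ^ 2 ≤ ⟪A v, v⟫)
    (hup : ∀ v : E, ⟪A v, v⟫ ≤ L * ‖v‖ ^ 2)
    (κ : ℝ) (hκ : κ = L / μ) :
    Function.Bijective A ∧
    ∀ (b x₀ : E) (ℓ : ℕ) (xstar : E), A xstar = b →
      (∃ y : E,
        (∃ z ∈ Submodule.span ℝ {w : E | ∃ j < ℓ, w = (A ^ j) (b - A x₀)}, y = x₀ + z) ∧
        ⟪A (xstar - y), xstar - y⟫ ≤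
          4 * ((Real.sqrt κ - 1) / (Real.sqrt κ + 1)) ^ (2 * ℓ) *
            ⟪A (xstar - x₀), xstar - x₀⟫) ∧
      ∀ xl : E,
        (∃ z ∈ Submodule.span ℝ {w : E | ∃ j < ℓ, w = (A ^ j) (b - A x₀)}, xl = x₀ + z) →
        (∀ y : E,
          (∃ z ∈ Submodule.span ℝ {w : E | ∃ j < ℓ, w = (A ^ j) (b - A x₀)}, y = x₀ + z) →
          ⟪A (xstar - xl), xstar - xl⟫ ≤ ⟪A (xstar - y), xstar - y⟫) →
        Real.sqrt ⟪A (xstar - xl), xstar - xl⟫ ≤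
          2 * ((Real.sqrt κ - 1) / (Real.sqrt κ + 1)) ^ ℓ *
            Real.sqrt ⟪A (xstar - x₀), xstar - x₀⟫ := by
  have hbij : Function.Bijective A := by
    have hinj : Function.Injective A := by
      rw [← LinearMap.ker_eq_bot, LinearMap.ker_eq_bot']
      intro v hv
      have h1 := hlow v
      rw [hv, inner_zero_left] at h1
      have h2 : ‖v‖ = 0 := by
        by_contra hne
        have hpos : 0 < ‖v‖ := (norm_nonneg v).lt_of_ne (Ne.symm hne)
        nlinarith [mul_pos hμ (pow_pos hpos 2)]
      exact norm_eq_zero.mp h2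
    exact ⟨hinj, (LinearMap.injective_iff_surjective).mp hinj⟩
  refine ⟨hbij, fun b x₀ ℓ xstar hx => ?_⟩
  have main := krylov_cheb A hA μ L hμ hμL hlow hup κ hκ b x₀ ℓ xstar hx
  refine ⟨main, fun xl hxl hmin => ?_⟩
  obtain ⟨y, hymem, hyb⟩ := main
  have h1 : ⟪A (xstar - xl), xstar - xl⟫ ≤
      4 * ((Real.sqrt κ - 1) / (Real.sqrt κ + 1)) ^ (2 * ℓ) * ⟪A (xstar - x₀), xstar - x₀⟫ :=
    le_trans (hmin y hymem) hyb
  have hκ1 : 1 ≤ κ := by rw [hκ, le_div_iff₀ hμ]; linarith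
  have hs1 : 1 ≤ Real.sqrt κ := by
    nlinarith [Real.sq_sqrt (by linarith : (0:ℝ) ≤ κ), Real.sqrt_nonneg κ]
  set σ := (Real.sqrt κ - 1) / (Real.sqrt κ + 1) with hσdef
  have hσ0 : 0 ≤ σ := div_nonneg (by linarith) (by linarith)
  calc Real.sqrt ⟪A (xstar - xl), xstar - xl⟫
      ≤ Real.sqrt (4 * σ ^ (2 * ℓ) * ⟪A (xstar - x₀), xstar - x₀⟫) := Real.sqrt_le_sqrt h1
    _ = 2 * σ ^ ℓ * Real.sqrt ⟪A (xstar - x₀), xstar - x₀⟫ := by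
        rw [show 4 * σ ^ (2 * ℓ) = (2 * σ ^ ℓ) ^ 2 from by
              rw [mul_pow, ← pow_mul, Nat.mul_comm]; norm_num,
          Real.sqrt_mul (sq_nonneg _), Real.sqrt_sq (by positivity)]
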